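/- Consider a feedforward Softplus network with activations a^{(l)}_i = σ_θ(z^{(l)}_i) where σ_θ(z) = θ·log(1 + e^{z/θ}) for fixed θ > 0, and the paired decomposed pre-activations z^{(l,±)} propagated by the canonical nonnegative linear map on the entrywise weight split. If the decomposed activations are updated by the Softplus rule a^{(l,+)}_i = σ'_θ(z^{(l)}_i)·z^{(l,+)}_i + θ·H_θ(z^{(l)}_i) and a^{(l,-)}_i = σ'_θ(z^{(l)}_i)·z^{(l,-)}_i, where σ'_θ(z) = 1/(1+e^{-z/θ}) and H_θ(z) is the binary entropy of σ'_θ(z), then both components are nonnegative and a^{(l,+)}_i - a^{(l,-)}_i = σ_θ(z^{(l)}_i) at every layer and neuron. -/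

import Mathlib

open Finset

noncomputable section

/-- Positive part of a real number. -/
def pPart (u : ℝ) : ℝ := max u 0

/-- Negative part of a real number. -/
def nPart (u : ℝ) : ℝ := max (-u) 0

/-- Softplus at temperature `θ`. -/
def softplusT (θ z : ℝ) : ℝ := θ * Real.log (1 + Real.exp (z / θ))

/-- Sigmoid at temperature `θ`. -/
def sigmoidT (θ z : ℝ) : ℝ := 1 / (1 + Real.exp (-z / θ))

/-- Binary Shannon entropy of the Bernoulli parameter `sigmoidT θ z`. -/
def binEntropyT (θ z : ℝ) : ℝ :=
  -(sigmoidT θ z * Real.log (sigmoidT θ z)) -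
    (1 - sigmoidT θ z) * Real.log (1 - sigmoidT θ z)

/-- Activations of a feedforward Softplus network at temperature `θ`. -/
def softAct (θ : ℝ) (n : ℕ → ℕ) (W : ∀ l, Fin (n (l + 1)) → Fin (n l) → ℝ)
    (b : ∀ l, Fin (n (l + 1)) → ℝ) (x : Fin (n 0) → ℝ) : ∀ l, Fin (n l) → ℝ
  | 0 => x
  | (l + 1) => fun i => softplusT θ (b l i + ∑ j, W l i j * softAct θ n W b x l j)

/-- Softplus-decomposition activation pairs: canonical nonnegative linear map on the
entrywise weight split, with the Softplus update
`a⁺ = σ'_θ(z⁺−z⁻)·z⁺ + θ·H_θ(z⁺−z⁻)`, `a⁻ = σ'_θ(z⁺−z⁻)·z⁻`. -/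
def softPair (θ : ℝ) (n : ℕ → ℕ) (W : ∀ l, Fin (n (l + 1)) → Fin (n l) → ℝ)
    (b : ∀ l, Fin (n (l + 1)) → ℝ) (x : Fin (n 0) → ℝ) : ∀ l, Fin (n l) → ℝ × ℝ
  | 0 => fun k => (pPart (x k), nPart (x k))
  | (l + 1) => fun i =>
      let zp := pPart (b l i) + ∑ j, (pPart (W l i j) * (softPair θ n W b x l j).1 +
        nPart (W l i j) * (softPair θ n W b x l j).2)
      let zm := nPart (b l i) + ∑ j, (pPart (W l i j) * (softPair θ n W b x l j).2 +
        nPart (W l i j) * (softPair θ n W b x l j).1)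
      (sigmoidT θ (zp - zm) * zp + θ * binEntropyT θ (zp - zm),
       sigmoidT θ (zp - zm) * zm)

lemma pn_eq (u : ℝ) : pPart u - nPart u = u := by
  rcases le_total u 0 with h | h <;> simp [pPart, nPart, max_eq_left, max_eq_right, h, neg_nonneg, neg_nonpos] <;> linarith

lemma sig_pos (θ z : ℝ) : 0 < sigmoidT θ z := by
  have := Real.exp_pos (-z / θ); rw [sigmoidT]; positivity

lemma sig_lt_one (θ z : ℝ) : sigmoidT θ z < 1 := by
  have h := Real.exp_pos (-z / θ)
  rw [sigmoidT, div_lt_one (by linarith)]; linarith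

lemma ent_nonneg (θ z : ℝ) : 0 ≤ binEntropyT θ z := by
  have h1 : sigmoidT θ z * Real.log (sigmoidT θ z) ≤ 0 :=
    mul_nonpos_of_nonneg_of_nonpos (sig_pos θ z).le
      (Real.log_nonpos (sig_pos θ z).le (sig_lt_one θ z).le)
  have h2 : (1 - sigmoidT θ z) * Real.log (1 - sigmoidT θ z) ≤ 0 :=
    mul_nonpos_of_nonneg_of_nonpos (by linarith [sig_lt_one θ z])
      (Real.log_nonpos (by linarith [sig_lt_one θ z]) (by linarith [sig_pos θ z]))
  rw [binEntropyT]; linarith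

lemma key_ident (θ : ℝ) (hθ : 0 < θ) (z : ℝ) :
    θ * binEntropyT θ z = softplusT θ z - sigmoidT θ z * z := by
  set u := z / θ with hu
  have hE : (0:ℝ) < Real.exp (-u) := Real.exp_pos _
  have h1E : (0:ℝ) < 1 + Real.exp (-u) := by linarith
  have hp : sigmoidT θ z = 1 / (1 + Real.exp (-u)) := by
    simp [sigmoidT, hu, neg_div]
  have hlogp : Real.log (sigmoidT θ z) = -Real.log (1 + Real.exp (-u)) := by
    rw [hp, one_div, Real.log_inv]
  have h1p : 1 - sigmoidT θ z = Real.exp (-u) / (1 + Real.exp (-u)) := by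
    rw [hp]; field_simp; ring
  have hlog1p : Real.log (1 - sigmoidT θ z) = -u - Real.log (1 + Real.exp (-u)) := by
    rw [h1p, Real.log_div (Real.exp_ne_zero _) h1E.ne', Real.log_exp]
  have hsp : softplusT θ z = θ * u + θ * Real.log (1 + Real.exp (-u)) := by
    have h : 1 + Real.exp (z / θ) = Real.exp u * (1 + Real.exp (-u)) := by
      rw [mul_add, mul_one, ← Real.exp_add]; simp [hu]; ring
    rw [softplusT, h, Real.log_mul (Real.exp_ne_zero _) h1E.ne', Real.log_exp]; ring
  have hz : z = θ * u := by rw [hu]; field_simp [hθ.ne']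
  rw [binEntropyT, hlogp, hlog1p, hsp, h1p, hp, hz]
  field_simp
  ring

/-- Layerwise recovery of the Softplus network by the Softplus decomposition: both
decomposed components are nonnegative, and their difference equals the Softplus
activation at every layer and neuron. -/
theorem softplus_decomposition_recovery (θ : ℝ) (hθ : 0 < θ) (n : ℕ → ℕ)
    (W : ∀ l, Fin (n (l + 1)) → Fin (n l) → ℝ)
    (b : ∀ l, Fin (n (l + 1)) → ℝ) (x : Fin (n 0) → ℝ) :
    (∀ l (i : Fin (n l)),
      0 ≤ (softPair θ n W b x l i).1 ∧ 0 ≤ (softPair θ n W b x l i).2) ∧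
    (∀ l (i : Fin (n l)),
      (softPair θ n W b x l i).1 - (softPair θ n W b x l i).2 = softAct θ n W b x l i) ∧
    (∀ l (i : Fin (n (l + 1))),
      (softPair θ n W b x (l + 1) i).1 - (softPair θ n W b x (l + 1) i).2 =
        softplusT θ (b l i + ∑ j, W l i j * softAct θ n W b x l j)) := by
  have main : ∀ l (i : Fin (n l)),
      (0 ≤ (softPair θ n W b x l i).1 ∧ 0 ≤ (softPair θ n W b x l i).2) ∧
      (softPair θ n W b x l i).1 - (softPair θ n W b x l i).2 = softAct θ n W b x l i := by
    intro l
    induction l with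
    | zero =>
      intro i
      refine ⟨⟨?_, ?_⟩, ?_⟩ <;> simp [softPair, softAct, pPart, nPart]
    | succ l ih =>
      intro i
      have hpair : softPair θ n W b x (l + 1) i =
          (sigmoidT θ
              ((pPart (b l i) + ∑ j, (pPart (W l i j) * (softPair θ n W b x l j).1 +
                nPart (W l i j) * (softPair θ n W b x l j).2)) -
               (nPart (b l i) + ∑ j, (pPart (W l i j) * (softPair θ n W b x l j).2 +
                nPart (W l i j) * (softPair θ n W b x l j).1))) *
              (pPart (b l i) + ∑ j, (pPart (W l i j) * (softPair θ n W b x l j).1 +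
                nPart (W l i j) * (softPair θ n W b x l j).2)) +
            θ * binEntropyT θ
              ((pPart (b l i) + ∑ j, (pPart (W l i j) * (softPair θ n W b x l j).1 +
                nPart (W l i j) * (softPair θ n W b x l j).2)) -
               (nPart (b l i) + ∑ j, (pPart (W l i j) * (softPair θ n W b x l j).2 +
                nPart (W l i j) * (softPair θ n W b x l j).1))),
           sigmoidT θ
              ((pPart (b l i) + ∑ j, (pPart (W l i j) * (softPair θ n W b x l j).1 +
                nPart (W l i j) * (softPair θ n W b x l j).2)) -
               (nPart (b l i) + ∑ j, (pPart (W l i j) * (softPair θ n W b x l j).2 +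
                nPart (W l i j) * (softPair θ n W b x l j).1))) *
              (nPart (b l i) + ∑ j, (pPart (W l i j) * (softPair θ n W b x l j).2 +
                nPart (W l i j) * (softPair θ n W b x l j).1))) := rfl
      set zp := pPart (b l i) + ∑ j, (pPart (W l i j) * (softPair θ n W b x l j).1 +
        nPart (W l i j) * (softPair θ n W b x l j).2) with hzp
      set zm := nPart (b l i) + ∑ j, (pPart (W l i j) * (softPair θ n W b x l j).2 +
        nPart (W l i j) * (softPair θ n W b x l j).1) with hzm
      have hppos : ∀ u : ℝ, 0 ≤ pPart u := fun u => le_max_right u 0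
      have hnpos : ∀ u : ℝ, 0 ≤ nPart u := fun u => le_max_right (-u) 0
      have hzp0 : 0 ≤ zp := by
        apply add_nonneg (hppos _)
        apply Finset.sum_nonneg
        intro j _
        exact add_nonneg (mul_nonneg (hppos _) ((ih j).1.1)) (mul_nonneg (hnpos _) ((ih j).1.2))
      have hzm0 : 0 ≤ zm := by
        apply add_nonneg (hnpos _)
        apply Finset.sum_nonneg
        intro j _
        exact add_nonneg (mul_nonneg (hppos _) ((ih j).1.2)) (mul_nonneg (hnpos _) ((ih j).1.1))
      have hdiff : zp - zm = b l i + ∑ j, W l i j * softAct θ n W b x l j := by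
        rw [hzp, hzm, add_sub_add_comm, ← Finset.sum_sub_distrib, pn_eq]
        congr 1
        apply Finset.sum_congr rfl
        intro j _
        have hA := (ih j).2
        have hW := pn_eq (W l i j)
        calc pPart (W l i j) * (softPair θ n W b x l j).1 +
              nPart (W l i j) * (softPair θ n W b x l j).2 -
              (pPart (W l i j) * (softPair θ n W b x l j).2 +
              nPart (W l i j) * (softPair θ n W b x l j).1)
            = (pPart (W l i j) - nPart (W l i j)) *
              ((softPair θ n W b x l j).1 - (softPair θ n W b x l j).2) := by ring
          _ = W l i j * softAct θ n W b x l j := by rw [hW, hA]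
      refine ⟨⟨?_, ?_⟩, ?_⟩
      · rw [hpair]
        exact add_nonneg (mul_nonneg (sig_pos _ _).le hzp0)
          (mul_nonneg hθ.le (ent_nonneg _ _))
      · rw [hpair]
        exact mul_nonneg (sig_pos _ _).le hzm0
      · rw [hpair]
        show sigmoidT θ (zp - zm) * zp + θ * binEntropyT θ (zp - zm) -
            sigmoidT θ (zp - zm) * zm = _
        rw [key_ident θ hθ (zp - zm)]
        have : sigmoidT θ (zp - zm) * zp + (softplusT θ (zp - zm) -
            sigmoidT θ (zp - zm) * (zp - zm)) - sigmoidT θ (zp - zm) * zm =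
            softplusT θ (zp - zm) := by ring
        rw [this, hdiff]
        simp [softAct]
  refine ⟨fun l i => (main l i).1, fun l i => (main l i).2, fun l i => ?_⟩
  rw [(main (l + 1) i).2]
  simp [softAct]

end
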